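/- arXiv:0803.0456 — 2 statements merged into one kernel-verified Lean document; each statement's English description precedes it below -/
import Mathlib

section
/- For every λ ∈ C, the operator Q(λ) = A_0 + λ A_1 + λ² A_2 on H¹(T²) is a Fredholm operator of index zero. -/
noncomputable section
open MeasureTheory Complex
open scoped InnerProductSpace

/-- The fundamental periodicity cell `Ω = (-π, π]²` of the lattice `2πℤ²`. -/
def Cell : Set (ℝ × ℝ) := Set.Ioc (-Real.pi) Real.pi ×ˢ Set.Ioc (-Real.pi) Real.pi

/-- `2πℤ²`-periodicity of a function on `ℝ²`, i.e. it is a function on the torus `T²`. -/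
def PeriodicT2 (f : ℝ × ℝ → ℂ) : Prop :=
  (∀ x : ℝ × ℝ, f (x.1 + 2 * Real.pi, x.2) = f x) ∧
  (∀ x : ℝ × ℝ, f (x.1, x.2 + 2 * Real.pi) = f x)

/-- The gradient `∇f = (∂₁ f, ∂₂ f)` of a function `f : ℝ² → ℂ`. -/
def gradF (f : ℝ × ℝ → ℂ) (x : ℝ × ℝ) : ℂ × ℂ :=
  (fderiv ℝ f x (1, 0), fderiv ℝ f x (0, 1))

/-- `H` is a model of the periodic Sobolev space `H¹(T²)`: `rep` realizes elements of `H`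
injectively as periodic functions on `ℝ²`, and the inner product of `H` is the `H¹` inner
product `(u,v) ↦ ∫_Ω u v̄ + ∇u · ∇v̄` (Mathlib convention: conjugate-linear in the first slot,
so `⟪v, u⟫` is linear in `u` and conjugate-linear in `v`). -/
structure IsH1TorusModel (H : Type) [NormedAddCommGroup H] [InnerProductSpace ℂ H]
    (rep : H →ₗ[ℂ] ((ℝ × ℝ) → ℂ)) : Prop where
  injective : Function.Injective rep
  periodic : ∀ u : H, PeriodicT2 (rep u)
  inner_eq : ∀ u v : H, ⟪v, u⟫_ℂ =
    ∫ x in Cell, rep u x * (starRingEnd ℂ) (rep v x)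
      + (gradF (rep u) x).1 * (starRingEnd ℂ) ((gradF (rep v) x).1)
      + (gradF (rep u) x).2 * (starRingEnd ℂ) ((gradF (rep v) x).2)

/-- The sesquilinear form `a₁(u,v) = 2i ∫_Ω u (k̂ · ∇v̄) dx` (linear in `u`,
conjugate-linear in `v`), for a fixed unit vector `k̂ = (k₁, k₂) ∈ ℝ²`. -/
def formA1 {H : Type} [NormedAddCommGroup H] [InnerProductSpace ℂ H]
    (rep : H →ₗ[ℂ] ((ℝ × ℝ) → ℂ)) (k1 k2 : ℝ) (u v : H) : ℂ :=
  2 * Complex.I * ∫ x in Cell, rep u x *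
    ((k1 : ℂ) * (starRingEnd ℂ) ((gradF (rep v) x).1)
      + (k2 : ℂ) * (starRingEnd ℂ) ((gradF (rep v) x).2))

/-- The sesquilinear form `a₂(u,v) = ∫_Ω u v̄ dx`. -/
def formA2 {H : Type} [NormedAddCommGroup H] [InnerProductSpace ℂ H]
    (rep : H →ₗ[ℂ] ((ℝ × ℝ) → ℂ)) (u v : H) : ℂ :=
  ∫ x in Cell, rep u x * (starRingEnd ℂ) (rep v x)

/-- The compactness of the embedding `H¹(T²) ↪ L²(T²)`: every bounded sequence in `H`
has a subsequence whose representatives form a Cauchy sequence in the `L²(Ω)` norm. -/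
def CompactEmbeddingL2 {H : Type} [NormedAddCommGroup H] [InnerProductSpace ℂ H]
    (rep : H →ₗ[ℂ] ((ℝ × ℝ) → ℂ)) : Prop :=
  ∀ s : ℕ → H, (∃ C : ℝ, ∀ n, ‖s n‖ ≤ C) →
    ∃ φ : ℕ → ℕ, StrictMono φ ∧ ∀ ε > (0:ℝ), ∃ N, ∀ m ≥ N, ∀ n ≥ N,
      (∫ x in Cell, ‖rep (s (φ m) - s (φ n)) x‖ ^ 2) < ε

/-- The Dirichlet form `(u,v) ↦ ∫_{T²} ∇u · ∇v̄ dx`. -/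
def formDirichlet {H : Type} [NormedAddCommGroup H] [InnerProductSpace ℂ H]
    (rep : H →ₗ[ℂ] ((ℝ × ℝ) → ℂ)) (u v : H) : ℂ :=
  ∫ x in Cell, (gradF (rep u) x).1 * (starRingEnd ℂ) ((gradF (rep v) x).1)
    + (gradF (rep u) x).2 * (starRingEnd ℂ) ((gradF (rep v) x).2)

/-- `T` is a Fredholm operator of index zero: closed range, finite-dimensional kernel and
cokernel, and `dim ker T = dim coker T`. -/
def IsFredholmIndexZero {H : Type} [NormedAddCommGroup H] [InnerProductSpace ℂ H]
    (T : H →L[ℂ] H) : Prop :=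
  IsClosed (LinearMap.range (T : H →ₗ[ℂ] H) : Set H) ∧
  FiniteDimensional ℂ (LinearMap.ker (T : H →ₗ[ℂ] H)) ∧
  FiniteDimensional ℂ (H ⧸ LinearMap.range (T : H →ₗ[ℂ] H)) ∧
  Module.finrank ℂ (LinearMap.ker (T : H →ₗ[ℂ] H)) =
    Module.finrank ℂ (H ⧸ LinearMap.range (T : H →ₗ[ℂ] H))

section FA
variable {H : Type} [NormedAddCommGroup H] [InnerProductSpace ℂ H] [CompleteSpace H]


/-- A subspace containing a closed finite-codimensional subspace is closed. -/
lemma isClosed_of_le_finiteCodim (N : Submodule ℂ H) (V : Submodule ℂ H)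
    (hNc : IsClosed (N : Set H)) (hNV : N ≤ V) [FiniteDimensional ℂ (H ⧸ N)] :
    IsClosed (V : Set H) := by
  obtain ⟨f, hf⟩ := Submodule.ClosedComplemented.of_quotient_finiteDimensional hNc
  set P : H →L[ℂ] H := N.subtypeL.comp f with hP
  have hPN : ∀ x ∈ N, P x = x := by
    intro x hx
    simp [hP, hf ⟨x, hx⟩]
  have hPmem : ∀ x : H, P x ∈ N := fun x => (f x).2
  set W : Submodule ℂ H := V ⊓ LinearMap.ker (P : H →ₗ[ℂ] H) with hW
  have hWfin : FiniteDimensional ℂ W := by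
    have hinj : Function.Injective (N.mkQ.comp W.subtype) := by
      intro a b hab
      have : (a : H) - (b : H) ∈ N := by
        have hab' : N.mkQ (a : H) = N.mkQ (b : H) := hab
        rw [← Submodule.ker_mkQ N, LinearMap.mem_ker, map_sub, hab', sub_self]
      have ha : P ((a : H) - (b : H)) = (a : H) - (b : H) := hPN _ this
      have hb : P ((a : H) - (b : H)) = 0 := by
        have ha' : P (a : H) = 0 := a.2.2
        have hb' : P (b : H) = 0 := b.2.2
        rw [map_sub, ha', hb', sub_zero]
      have : (a : H) = (b : H) := by
        have := ha.symm.trans hb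
        rwa [sub_eq_zero] at this
      exact Subtype.ext this
    exact FiniteDimensional.of_injective (N.mkQ.comp W.subtype) hinj
  have hWc : IsClosed (W : Set H) := W.closed_of_finiteDimensional
  rw [← closure_eq_iff_isClosed]
  refine subset_antisymm ?_ subset_closure
  intro x hx
  have h1 : (x - P x) ∈ closure ((fun y => y - P y) '' (V : Set H)) := by
    have hc : Continuous fun y : H => y - P y := continuous_id.sub P.continuous
    exact map_mem_closure (f := fun y => y - P y) hc hx (Set.mapsTo_image _ _)
  have h2 : ((fun y => y - P y) '' (V : Set H)) ⊆ (W : Set H) := by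
    rintro _ ⟨y, hy, rfl⟩
    refine ⟨V.sub_mem hy (hNV (hPmem y)), ?_⟩
    have : P (P y) = P y := hPN _ (hPmem y)
    simp [LinearMap.mem_ker, map_sub, this]
  have h3 : (x - P x) ∈ (W : Set H) := by
    have := closure_mono h2 h1
    rwa [hWc.closure_eq] at this
  have hxx : x = P x + (x - P x) := by abel
  rw [hxx]
  exact V.add_mem (hNV (hPmem x)) h3.1

/-- `1 + F` with `F` of finite rank is Fredholm of index zero. -/
lemma fredholm_one_add_finiteRank (F : H →L[ℂ] H)
    (hF : FiniteDimensional ℂ (LinearMap.range (F : H →ₗ[ℂ] H))) :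
    IsFredholmIndexZero (1 + F) := by
  classical
  set Fl : H →ₗ[ℂ] H := (F : H →ₗ[ℂ] H) with hFl
  set T : H →L[ℂ] H := 1 + F with hT
  set Tl : H →ₗ[ℂ] H := (T : H →ₗ[ℂ] H) with hTl
  have hTapp : ∀ x : H, Tl x = x + Fl x := by
    intro x; simp [hTl, hT, hFl]
  set N : Submodule ℂ H := LinearMap.ker Fl with hN
  have hTN : ∀ x ∈ N, Tl x = x := by
    intro x hx
    rw [hTapp, LinearMap.mem_ker.mp hx, add_zero]
  have hNT : N ≤ LinearMap.range Tl := by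
    intro x hx; exact ⟨x, hTN x hx⟩
  haveI := hF
  have hQfin : FiniteDimensional ℂ (H ⧸ N) := Fl.quotKerEquivRange.symm.finiteDimensional
  -- the induced map on the quotient
  have hcomap : N ≤ N.comap Tl := by
    intro x hx
    have : Fl (Tl x) = 0 := by
      rw [hTN x hx]; exact LinearMap.mem_ker.mp hx
    exact LinearMap.mem_ker.mpr this
  set Tbar : (H ⧸ N) →ₗ[ℂ] (H ⧸ N) := N.mapQ N Tl hcomap with hTbar
  have hTbar_mk : ∀ x : H, Tbar (N.mkQ x) = N.mkQ (Tl x) := by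
    intro x
    rw [Submodule.mkQ_apply, Submodule.mkQ_apply, hTbar, Submodule.mapQ_apply]
  -- kernel equivalence
  have hkermem : ∀ u : LinearMap.ker Tl, N.mkQ (u : H) ∈ LinearMap.ker Tbar := by
    intro u
    rw [LinearMap.mem_ker, hTbar_mk, LinearMap.mem_ker.mp u.2, map_zero]
  set φ : LinearMap.ker Tl →ₗ[ℂ] LinearMap.ker Tbar :=
    LinearMap.codRestrict _ (N.mkQ.comp (LinearMap.ker Tl).subtype) hkermem with hφ
  have hφinj : Function.Injective φ := by
    intro a b hab
    have h1 : N.mkQ ((a : H) - (b : H)) = 0 := by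
      have := congrArg (Subtype.val) hab
      simp only [hφ, LinearMap.codRestrict_apply, LinearMap.comp_apply,
        Submodule.subtype_apply] at this
      rw [map_sub, sub_eq_zero]; exact this
    have h2 : (a : H) - (b : H) ∈ N := by
      rw [← Submodule.ker_mkQ N]
      exact LinearMap.mem_ker.mpr h1
    have h3 : Tl ((a : H) - (b : H)) = (a : H) - (b : H) := hTN _ h2
    have h4 : Tl ((a : H) - (b : H)) = 0 := by
      rw [map_sub, LinearMap.mem_ker.mp a.2, LinearMap.mem_ker.mp b.2, sub_zero]
    exact Subtype.ext (by rw [← sub_eq_zero, ← h3, h4])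
  have hφsurj : Function.Surjective φ := by
    rintro ⟨q, hq⟩
    obtain ⟨x, rfl⟩ := N.mkQ_surjective q
    have hTx : Tl x ∈ N := by
      have h0 := LinearMap.mem_ker.mp hq
      rw [hTbar_mk] at h0
      rw [← Submodule.ker_mkQ N]
      exact LinearMap.mem_ker.mpr h0
    refine ⟨⟨x - Tl x, ?_⟩, ?_⟩
    · rw [LinearMap.mem_ker, map_sub, hTN _ hTx, sub_self]
    · apply Subtype.ext
      simp only [hφ, LinearMap.codRestrict_apply, LinearMap.comp_apply,
        Submodule.subtype_apply]
      show N.mkQ (x - Tl x) = N.mkQ x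
      rw [map_sub]
      have : N.mkQ (Tl x) = 0 := (Submodule.Quotient.mk_eq_zero N).mpr hTx
      rw [this, sub_zero]
  have ekers : LinearMap.ker Tl ≃ₗ[ℂ] LinearMap.ker Tbar :=
    LinearEquiv.ofBijective φ ⟨hφinj, hφsurj⟩
  have hkerfin : FiniteDimensional ℂ (LinearMap.ker Tl) :=
    ekers.symm.finiteDimensional
  -- cokernel equivalence
  set π : H →ₗ[ℂ] ((H ⧸ N) ⧸ LinearMap.range Tbar) :=
    (LinearMap.range Tbar).mkQ.comp N.mkQ with hπ
  have hπsurj : Function.Surjective π :=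
    (LinearMap.range Tbar).mkQ_surjective.comp N.mkQ_surjective
  have hmemrange : ∀ x : H, x ∈ LinearMap.range Tl ↔ N.mkQ x ∈ LinearMap.range Tbar := by
    intro x
    constructor
    · rintro ⟨y, rfl⟩
      exact ⟨N.mkQ y, hTbar_mk y⟩
    · rintro ⟨q, hq⟩
      obtain ⟨y, rfl⟩ := N.mkQ_surjective q
      rw [hTbar_mk] at hq
      have hmem : Tl y - x ∈ N := by
        rw [← Submodule.ker_mkQ N, LinearMap.mem_ker, map_sub, hq, sub_self]
      refine ⟨y - (Tl y - x), ?_⟩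
      rw [map_sub, hTN _ hmem, sub_sub_cancel]
  have hkerπ : LinearMap.ker π = LinearMap.range Tl := by
    ext x
    simp only [LinearMap.mem_ker, hπ, LinearMap.comp_apply]
    rw [← LinearMap.mem_ker, Submodule.ker_mkQ]
    exact (hmemrange x).symm
  have ecok : (H ⧸ LinearMap.range Tl) ≃ₗ[ℂ] ((H ⧸ N) ⧸ LinearMap.range Tbar) :=
    (Submodule.quotEquivOfEq _ _ hkerπ.symm).trans (π.quotKerEquivOfSurjective hπsurj)
  have hcokfin : FiniteDimensional ℂ (H ⧸ LinearMap.range Tl) :=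
    ecok.symm.finiteDimensional
  -- index computation
  have hrank1 : Module.finrank ℂ (LinearMap.ker Tbar) + Module.finrank ℂ (LinearMap.range Tbar)
      = Module.finrank ℂ (H ⧸ N) := by
    rw [add_comm]
    exact LinearMap.finrank_range_add_finrank_ker Tbar
  have hrank2 : Module.finrank ℂ ((H ⧸ N) ⧸ LinearMap.range Tbar)
      + Module.finrank ℂ (LinearMap.range Tbar) = Module.finrank ℂ (H ⧸ N) :=
    Submodule.finrank_quotient_add_finrank _
  have hidx : Module.finrank ℂ (LinearMap.ker Tl)
      = Module.finrank ℂ (H ⧸ LinearMap.range Tl) := by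
    rw [ekers.finrank_eq, ecok.finrank_eq]
    omega
  -- closedness
  have hNclosed : IsClosed (N : Set H) := ContinuousLinearMap.isClosed_ker F
  have hclosed : IsClosed ((LinearMap.range Tl : Submodule ℂ H) : Set H) :=
    isClosed_of_le_finiteCodim N (LinearMap.range Tl) hNclosed hNT
  exact ⟨hclosed, hkerfin, hcokfin, hidx⟩

/-- Fredholm index zero is preserved by composing with a continuous linear equivalence. -/
lemma fredholm_comp_equiv (e : H ≃L[ℂ] H) (T : H →L[ℂ] H) (h : IsFredholmIndexZero T) :
    IsFredholmIndexZero ((e : H →L[ℂ] H).comp T) := by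
  obtain ⟨hcl, hker, hcok, hidx⟩ := h
  set Tl : H →ₗ[ℂ] H := (T : H →ₗ[ℂ] H) with hTl
  have hcoe : (((e : H →L[ℂ] H).comp T : H →L[ℂ] H) : H →ₗ[ℂ] H)
      = (e.toLinearEquiv : H →ₗ[ℂ] H) ∘ₗ Tl := rfl
  have hkereq : LinearMap.ker (((e : H →L[ℂ] H).comp T : H →L[ℂ] H) : H →ₗ[ℂ] H)
      = LinearMap.ker Tl := by
    have h0 : LinearMap.ker (e.toLinearEquiv : H →ₗ[ℂ] H) = ⊥ :=
      LinearMap.ker_eq_bot_of_injective e.injective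
    rw [hcoe, LinearMap.ker_comp, h0, Submodule.comap_bot]
  have hrangeeq : LinearMap.range (((e : H →L[ℂ] H).comp T : H →L[ℂ] H) : H →ₗ[ℂ] H)
      = (LinearMap.range Tl).map (e.toLinearEquiv : H →ₗ[ℂ] H) := by
    rw [hcoe, LinearMap.range_comp]
  refine ⟨?_, ?_, ?_, ?_⟩
  · rw [hrangeeq]
    have : ((LinearMap.range Tl).map (e.toLinearEquiv : H →ₗ[ℂ] H) : Set H)
        = e.toHomeomorph '' (LinearMap.range Tl : Set H) := by
      ext x; simp only [Submodule.map_coe]; rfl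
    rw [this]
    exact (e.toHomeomorph.isClosed_image).mpr hcl
  · rw [hkereq]; exact hker
  · rw [hrangeeq]
    exact (Submodule.Quotient.equiv (LinearMap.range Tl) _ e.toLinearEquiv rfl).finiteDimensional
  · rw [hkereq, hrangeeq]
    rw [hidx]
    exact (Submodule.Quotient.equiv (LinearMap.range Tl) _ e.toLinearEquiv rfl).finrank_eq

/-- Sequential compactness of an operator. -/
def SeqCompactOp (K : H →L[ℂ] H) : Prop :=
  ∀ s : ℕ → H, (∃ C : ℝ, ∀ n, ‖s n‖ ≤ C) →
    ∃ φ : ℕ → ℕ, StrictMono φ ∧ CauchySeq (fun n => K (s (φ n)))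

lemma exists_net (K : H →L[ℂ] H) (hK : SeqCompactOp K) (δ : ℝ) (hδ : 0 < δ) :
    ∃ t : Finset H, ∀ u : H, ‖u‖ ≤ 1 → ∃ y ∈ t, ‖K u - y‖ < δ := by
  classical
  by_contra hcon
  push_neg at hcon
  have h : ∀ t : Finset H, ∃ u : H, ‖u‖ ≤ 1 ∧ ∀ y ∈ t, δ ≤ ‖K u - y‖ := by
    intro t
    obtain ⟨u, hu1, hu2⟩ := hcon t
    exact ⟨u, hu1, fun y hy => hu2 y hy⟩
  choose g hg1 hg2 using h
  let t : ℕ → Finset H := fun n => Nat.rec ∅ (fun _ tn => insert (K (g tn)) tn) n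
  have ht : ∀ n, t (n + 1) = insert (K (g (t n))) (t n) := fun n => rfl
  have hmono : ∀ m n, m ≤ n → t m ⊆ t n := by
    intro m n hmn
    induction n with
    | zero => simp_all
    | succ k ih =>
      rcases eq_or_lt_of_le hmn with h1 | h1
      · subst h1; rfl
      · exact (ih (Nat.lt_succ_iff.mp h1)).trans
          (by rw [ht]; exact Finset.subset_insert _ _)
  set u : ℕ → H := fun n => g (t n) with hu
  have hfar : ∀ m n, m < n → δ ≤ ‖K (u n) - K (u m)‖ := by
    intro m n hmn
    have hmem : K (u m) ∈ t n := by
      apply hmono (m + 1) n hmn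
      rw [ht]
      exact Finset.mem_insert_self _ _
    exact hg2 (t n) _ hmem
  obtain ⟨φ, hφ, hc⟩ := hK u ⟨1, fun n => hg1 _⟩
  obtain ⟨N, hN⟩ := Metric.cauchySeq_iff.mp hc δ hδ
  have h1 := hN (N + 1) (Nat.le_succ N) N le_rfl
  rw [dist_eq_norm] at h1
  exact absurd h1 (not_lt.mpr (hfar (φ N) (φ (N + 1)) (hφ (Nat.lt_succ_self N))))

lemma exists_finiteRank_approx (K : H →L[ℂ] H) (hK : SeqCompactOp K) :
    ∃ S F : H →L[ℂ] H, K = S + F ∧ ‖S‖ < 1 ∧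
      FiniteDimensional ℂ (LinearMap.range (F : H →ₗ[ℂ] H)) := by
  obtain ⟨t, ht⟩ := exists_net K hK (1/2) (by norm_num)
  set V : Submodule ℂ H := Submodule.span ℂ (t : Set H) with hV
  set F : H →L[ℂ] H := V.subtypeL.comp (V.orthogonalProjectionOnto) with hFdef
  have hFval : ∀ x : H, F x = (V.orthogonalProjectionOnto x : H) := fun x => rfl
  set S : H →L[ℂ] H := K - F.comp K with hSdef
  have hSbound : ∀ u : H, ‖S u‖ ≤ (1/2) * ‖u‖ := by
    intro u
    rcases eq_or_ne u 0 with rfl | h0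
    · simp
    · have hnorm : ‖(‖u‖⁻¹ • u : H)‖ = 1 := by
        rw [norm_smul, norm_inv, norm_norm, inv_mul_cancel₀ (norm_ne_zero_iff.mpr h0)]
      set w : H := ‖u‖⁻¹ • u with hw
      obtain ⟨y, hyt, hy⟩ := ht w (le_of_eq hnorm)
      have hymem : y ∈ V := Submodule.subset_span hyt
      have hmin : ‖K w - F (K w)‖ ≤ ‖K w - y‖ := by
        rw [show F (K w) = V.starProjection (K w) from rfl, Submodule.starProjection_minimal]
        have hbdd : BddBelow (Set.range fun x : V => ‖K w - (x : H)‖) := by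
          refine ⟨0, ?_⟩
          rintro r ⟨x, rfl⟩
          exact norm_nonneg _
        exact ciInf_le hbdd (⟨y, hymem⟩ : V)
      have hSw : ‖S w‖ ≤ 1/2 := by
        have hswe : S w = K w - F (K w) := rfl
        rw [hswe]
        exact le_of_lt (lt_of_le_of_lt hmin hy)
      have hSu : S w = ‖u‖⁻¹ • S u := by rw [hw]; exact S.map_smul _ _
      have hnu : ‖S u‖ = ‖u‖ * ‖S w‖ := by
        rw [hSu, norm_smul, norm_inv, norm_norm, ← mul_assoc,
          mul_inv_cancel₀ (norm_ne_zero_iff.mpr h0), one_mul]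
      rw [hnu, mul_comm]
      exact mul_le_mul_of_nonneg_right hSw (norm_nonneg u)
  have hSnorm : ‖S‖ ≤ 1/2 := ContinuousLinearMap.opNorm_le_bound S (by norm_num) hSbound
  refine ⟨S, F.comp K, by rw [hSdef]; abel, lt_of_le_of_lt hSnorm (by norm_num), ?_⟩
  have hle : LinearMap.range ((F.comp K : H →L[ℂ] H) : H →ₗ[ℂ] H) ≤ V := by
    rintro x ⟨z, rfl⟩
    exact (V.orthogonalProjectionOnto (K z)).2
  exact Submodule.finiteDimensional_of_le hle

/-- `1 + K` with `K` sequentially compact is Fredholm of index zero. -/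
lemma fredholm_one_add_seqCompact (K : H →L[ℂ] H) (hK : SeqCompactOp K) :
    IsFredholmIndexZero (1 + K) := by
  obtain ⟨S, F, hKSF, hS, hF⟩ := exists_finiteRank_approx K hK
  have hU : ‖-S‖ < 1 := by rwa [norm_neg]
  set U : (H →L[ℂ] H)ˣ := Units.oneSub (-S) hU with hUdef
  have hUval : (U : H →L[ℂ] H) = 1 + S := by
    show (1 : H →L[ℂ] H) - (-S) = 1 + S
    rw [sub_neg_eq_add]
  set G : H →L[ℂ] H := (↑U⁻¹ : H →L[ℂ] H) * F with hGdef
  have hGfin : FiniteDimensional ℂ (LinearMap.range (G : H →ₗ[ℂ] H)) := by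
    haveI := hF
    have : (G : H →ₗ[ℂ] H) = ((↑U⁻¹ : H →L[ℂ] H) : H →ₗ[ℂ] H) ∘ₗ (F : H →ₗ[ℂ] H) := rfl
    rw [this, LinearMap.range_comp]
    infer_instance
  have h1G := fredholm_one_add_finiteRank G hGfin
  set e : H ≃L[ℂ] H := ContinuousLinearEquiv.unitsEquiv ℂ H U with hedef
  have hecoe : (e : H →L[ℂ] H) = (U : H →L[ℂ] H) := rfl
  have hcomp : (e : H →L[ℂ] H).comp (1 + G) = 1 + K := by
    have hmul : (e : H →L[ℂ] H).comp (1 + G) = (U : H →L[ℂ] H) * (1 + G) := by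
      rw [hecoe]; rfl
    rw [hmul, mul_add, mul_one, hGdef, ← mul_assoc, Units.mul_inv, one_mul, hUval, hKSF]
    abel
  have := fredholm_comp_equiv e (1 + G) h1G
  rwa [hcomp] at this

end FA

lemma measurableSet_Cell : MeasurableSet Cell :=
  measurableSet_Ioc.prod measurableSet_Ioc

section Meas

variable {H : Type} [NormedAddCommGroup H] [InnerProductSpace ℂ H]
variable (rep : H →ₗ[ℂ] ((ℝ × ℝ) → ℂ))

/-- The `H¹` pairing integrand. -/
def bF (u v : H) : (ℝ × ℝ) → ℂ := fun x =>
  rep u x * (starRingEnd ℂ) (rep v x)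
    + (gradF (rep u) x).1 * (starRingEnd ℂ) ((gradF (rep v) x).1)
    + (gradF (rep u) x).2 * (starRingEnd ℂ) ((gradF (rep v) x).2)

/-- The gradient pairing integrand. -/
def gG (u v : H) : (ℝ × ℝ) → ℂ := fun x =>
  (gradF (rep u) x).1 * (starRingEnd ℂ) ((gradF (rep v) x).1)
    + (gradF (rep u) x).2 * (starRingEnd ℂ) ((gradF (rep v) x).2)

/-- The `L²` pairing integrand. -/
def fL (u v : H) : (ℝ × ℝ) → ℂ := fun x => rep u x * (starRingEnd ℂ) (rep v x)

def nuF (u : H) : (ℝ × ℝ) → ℝ := fun x => ‖rep u x‖ ^ 2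
def q1F (u : H) : (ℝ × ℝ) → ℝ := fun x => ‖fderiv ℝ (rep u) x (1, 0)‖ ^ 2
def q2F (u : H) : (ℝ × ℝ) → ℝ := fun x => ‖fderiv ℝ (rep u) x (0, 1)‖ ^ 2
def suF (u : H) : (ℝ × ℝ) → ℝ := fun x => nuF rep u x + q1F rep u x + q2F rep u x

lemma bF_eq (u v : H) : bF rep u v = fun x => fL rep u v x + gG rep u v x := by
  funext x; simp [bF, gG, fL, add_assoc]

lemma measurable_d1 (u : H) : Measurable fun x => (gradF (rep u) x).1 :=
  measurable_fderiv_apply_const ℝ (rep u) (1, 0)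

lemma measurable_d2 (u : H) : Measurable fun x => (gradF (rep u) x).2 :=
  measurable_fderiv_apply_const ℝ (rep u) (0, 1)

lemma measurable_q1 (u : H) : Measurable (q1F rep u) :=
  ((measurable_d1 rep u).norm).pow_const 2

lemma measurable_q2 (u : H) : Measurable (q2F rep u) :=
  ((measurable_d2 rep u).norm).pow_const 2

lemma measurable_gG (u v : H) : Measurable (gG rep u v) := by
  apply Measurable.add
  · exact (measurable_d1 rep u).mul ((Complex.continuous_conj.measurable).comp
      (measurable_d1 rep v))
  · exact (measurable_d2 rep u).mul ((Complex.continuous_conj.measurable).comp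
      (measurable_d2 rep v))

variable (hmodel : ∀ u v : H, ⟪v, u⟫_ℂ = ∫ x in Cell, bF rep u v x)
include hmodel

lemma bF_integrable {u v : H} (h : ⟪v, u⟫_ℂ ≠ 0) :
    Integrable (bF rep u v) (volume.restrict Cell) := by
  by_contra hni
  exact h ((hmodel u v).trans (integral_undef hni))

omit hmodel in
lemma bF_self (u : H) : ∀ x, bF rep u u x = ((suF rep u x : ℝ) : ℂ) := by
  intro x
  have hz : ∀ z : ℂ, z * (starRingEnd ℂ) z = ((‖z‖ ^ 2 : ℝ) : ℂ) := by
    intro z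
    rw [Complex.mul_conj]
    norm_cast
    rw [Complex.normSq_eq_norm_sq]
  simp only [bF, suF, nuF, q1F, q2F, hz, gradF]
  push_cast
  ring

lemma suF_integrable (u : H) :
    Integrable (suF rep u) (volume.restrict Cell) ∧
      (∫ x in Cell, suF rep u x) = ‖u‖ ^ 2 := by
  rcases eq_or_ne u 0 with rfl | h0
  · have h0 : rep 0 = (0 : (ℝ × ℝ) → ℂ) := map_zero rep
    have hz : suF rep (0 : H) = fun _ => 0 := by
      funext x
      have hc : fderiv ℝ (0 : (ℝ × ℝ) → ℂ) x = 0 := by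
        have h00 : (0 : (ℝ × ℝ) → ℂ) = fun _ => (0 : ℂ) := rfl
        rw [h00]
        exact fderiv_const_apply 0
      simp [suF, nuF, q1F, q2F, h0, hc]
    rw [hz]
    constructor
    · exact integrable_zero _ _ _
    · simp
  · have hinner : ⟪u, u⟫_ℂ ≠ 0 := fun h => h0 (inner_self_eq_zero.mp h)
    have hb := bF_integrable rep hmodel hinner
    have heq : ∀ x, suF rep u x = (bF rep u u x).re := by
      intro x; rw [bF_self]; simp
    constructor
    · exact (hb.re).congr (Filter.Eventually.of_forall fun x => (heq x).symm)
    · have h1 : (∫ x in Cell, suF rep u x) = ∫ x in Cell, (bF rep u u x).re := by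
        exact integral_congr_ae (Filter.Eventually.of_forall heq)
      have h2 : (∫ x in Cell, (bF rep u u x).re) = (∫ x in Cell, bF rep u u x).re := by
        simpa using integral_re (𝕜 := ℂ) hb
      rw [h1, h2, ← hmodel u u]
      rw [@inner_self_eq_norm_sq_to_K ℂ]
      norm_cast

lemma suF_aesm (u : H) : AEStronglyMeasurable (suF rep u) (volume.restrict Cell) :=
  (suF_integrable rep hmodel u).1.aestronglyMeasurable

lemma nuF_aemeasurable (u : H) : AEMeasurable (nuF rep u) (volume.restrict Cell) := by
  have h : nuF rep u = fun x => suF rep u x - q1F rep u x - q2F rep u x := by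
    funext x; simp [suF]; ring
  rw [h]
  exact ((suF_aesm rep hmodel u).aemeasurable.sub
    (measurable_q1 rep u).aemeasurable).sub (measurable_q2 rep u).aemeasurable

omit hmodel in
lemma suF_nonneg (u : H) : ∀ x, 0 ≤ suF rep u x := by
  intro x
  have a1 : (0:ℝ) ≤ nuF rep u x := sq_nonneg _
  have a2 : (0:ℝ) ≤ q1F rep u x := sq_nonneg _
  have a3 : (0:ℝ) ≤ q2F rep u x := sq_nonneg _
  simp only [suF]; linarith

omit hmodel in
lemma nuF_nonneg (u : H) : ∀ x, 0 ≤ nuF rep u x := fun _ => sq_nonneg _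

omit hmodel in
lemma q1F_nonneg (u : H) : ∀ x, 0 ≤ q1F rep u x := fun _ => sq_nonneg _

omit hmodel in
lemma q2F_nonneg (u : H) : ∀ x, 0 ≤ q2F rep u x := fun _ => sq_nonneg _

omit hmodel in
lemma nuF_le_suF (u : H) : ∀ x, nuF rep u x ≤ suF rep u x := by
  intro x
  simp only [suF]
  linarith [q1F_nonneg rep u x, q2F_nonneg rep u x]

lemma nuF_integrable (u : H) : Integrable (nuF rep u) (volume.restrict Cell) := by
  refine Integrable.mono' (suF_integrable rep hmodel u).1
    (nuF_aemeasurable rep hmodel u).aestronglyMeasurable ?_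
  refine Filter.Eventually.of_forall fun x => ?_
  rw [Real.norm_of_nonneg (nuF_nonneg rep u x)]
  exact nuF_le_suF rep u x

lemma nuF_integral_le (u : H) : (∫ x in Cell, nuF rep u x) ≤ ‖u‖ ^ 2 := by
  rw [← (suF_integrable rep hmodel u).2]
  exact integral_mono (nuF_integrable rep hmodel u) (suF_integrable rep hmodel u).1
    (nuF_le_suF rep u)

omit hmodel in
lemma q1F_le_suF (u : H) : ∀ x, q1F rep u x ≤ suF rep u x := by
  intro x
  simp only [suF]
  linarith [nuF_nonneg rep u x, q2F_nonneg rep u x]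

omit hmodel in
lemma q2F_le_suF (u : H) : ∀ x, q2F rep u x ≤ suF rep u x := by
  intro x
  simp only [suF]
  linarith [nuF_nonneg rep u x, q1F_nonneg rep u x]

lemma q1F_integrable (u : H) : Integrable (q1F rep u) (volume.restrict Cell) := by
  refine Integrable.mono' (suF_integrable rep hmodel u).1
    (measurable_q1 rep u).aestronglyMeasurable ?_
  refine Filter.Eventually.of_forall fun x => ?_
  rw [Real.norm_of_nonneg (q1F_nonneg rep u x)]
  exact q1F_le_suF rep u x

lemma q2F_integrable (u : H) : Integrable (q2F rep u) (volume.restrict Cell) := by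
  refine Integrable.mono' (suF_integrable rep hmodel u).1
    (measurable_q2 rep u).aestronglyMeasurable ?_
  refine Filter.Eventually.of_forall fun x => ?_
  rw [Real.norm_of_nonneg (q2F_nonneg rep u x)]
  exact q2F_le_suF rep u x

lemma q1F_integral_le (u : H) : (∫ x in Cell, q1F rep u x) ≤ ‖u‖ ^ 2 := by
  rw [← (suF_integrable rep hmodel u).2]
  exact integral_mono (q1F_integrable rep hmodel u) (suF_integrable rep hmodel u).1
    (q1F_le_suF rep u)

lemma q2F_integral_le (u : H) : (∫ x in Cell, q2F rep u x) ≤ ‖u‖ ^ 2 := by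
  rw [← (suF_integrable rep hmodel u).2]
  exact integral_mono (q2F_integrable rep hmodel u) (suF_integrable rep hmodel u).1
    (q2F_le_suF rep u)

/-- `gG` is always integrable on the cell. -/
lemma gG_integrable (u v : H) : Integrable (gG rep u v) (volume.restrict Cell) := by
  refine Integrable.mono'
    (g := fun x => suF rep u x + suF rep v x) ?_
    (measurable_gG rep u v).aestronglyMeasurable ?_
  · exact (suF_integrable rep hmodel u).1.add (suF_integrable rep hmodel v).1
  · refine Filter.Eventually.of_forall fun x => ?_
    have h1 : ‖gG rep u v x‖ ≤
        ‖(gradF (rep u) x).1‖ * ‖(gradF (rep v) x).1‖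
          + ‖(gradF (rep u) x).2‖ * ‖(gradF (rep v) x).2‖ := by
      refine (norm_add_le _ _).trans ?_
      gcongr <;> rw [norm_mul, RCLike.norm_conj]
    refine h1.trans ?_
    have h2 : ∀ a b : ℝ, a * b ≤ (a ^ 2 + b ^ 2) / 2 := by
      intro a b; nlinarith [sq_nonneg (a - b)]
    have h3 := h2 ‖(gradF (rep u) x).1‖ ‖(gradF (rep v) x).1‖
    have h4 := h2 ‖(gradF (rep u) x).2‖ ‖(gradF (rep v) x).2‖
    simp only [suF, nuF, q1F, q2F, gradF] at *
    nlinarith [sq_nonneg ‖rep u x‖, sq_nonneg ‖rep v x‖]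

omit hmodel in
lemma fL_eq_bF_on_discont (u z : H) :
    ∀ x, ¬ContinuousAt (rep u) x → bF rep u z x = fL rep u z x := by
  intro x hx
  have hnd : ¬DifferentiableAt ℝ (rep u) x := fun h => hx h.continuousAt
  have h0 : fderiv ℝ (rep u) x = 0 := fderiv_zero_of_not_differentiableAt hnd
  simp [bF, fL, gradF, h0]

/-- On the set where `rep u` is discontinuous, `fun x => rep u x * conj (rep z x)`
is a.e. measurable, for every `z`. -/
lemma fL_aemeasurable_discont (u : H) (hu : u ≠ 0) (z : H) :
    AEMeasurable (fL rep u z)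
      ((volume.restrict Cell).restrict {x | ContinuousAt (rep u) x}ᶜ) := by
  have hCm : MeasurableSet ({x | ContinuousAt (rep u) x}ᶜ : Set (ℝ × ℝ)) :=
    (IsGδ.setOf_continuousAt (rep u)).measurableSet.compl
  have key : ∀ w : H, ⟪w, u⟫_ℂ ≠ 0 → AEMeasurable (fL rep u w)
      ((volume.restrict Cell).restrict {x | ContinuousAt (rep u) x}ᶜ) := by
    intro w hw
    have hb := (bF_integrable rep hmodel hw).aemeasurable.restrict
      (s := ({x | ContinuousAt (rep u) x}ᶜ : Set (ℝ × ℝ)))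
    refine hb.congr ?_
    rw [Filter.EventuallyEq, ae_restrict_iff' hCm]
    exact Filter.Eventually.of_forall fun x hx => fL_eq_bF_on_discont rep u w x hx
  have huu : ⟪u, u⟫_ℂ ≠ 0 := fun h => hu (inner_self_eq_zero.mp h)
  by_cases hA : ⟪u + z, u⟫_ℂ = 0
  · have hz : ⟪z, u⟫_ℂ ≠ 0 := by
      rw [inner_add_left] at hA
      intro h
      rw [h, add_zero] at hA
      exact huu hA
    exact key z hz
  · have m1 := key u huu
    have m2 := key (u + z) hA
    have heq : ∀ x, fL rep u z x = fL rep u (u + z) x - fL rep u u x := by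
      intro x
      have : rep (u + z) x = rep u x + rep z x := by rw [map_add]; rfl
      simp [fL, this, map_add, mul_add]
    refine (m2.sub m1).congr ?_
    exact Filter.Eventually.of_forall fun x => (heq x).symm

/-- The `L²` pairing integrand is a.e. measurable on the cell. -/
lemma fL_aemeasurable (u v : H) :
    AEMeasurable (fL rep u v) (volume.restrict Cell) := by
  rcases eq_or_ne u 0 with rfl | hu
  · have : fL rep (0 : H) v = fun _ => 0 := by
      funext x; simp [fL, map_zero rep]
    rw [this]; exact aemeasurable_const
  rcases eq_or_ne v 0 with rfl | hv
  · have : fL rep u (0 : H) = fun _ => 0 := by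
      funext x; simp [fL, map_zero rep]
    rw [this]; exact aemeasurable_const
  set C1 : Set (ℝ × ℝ) := {x | ContinuousAt (rep u) x} with hC1
  set C2 : Set (ℝ × ℝ) := {x | ContinuousAt (rep v) x} with hC2
  have hC1m : MeasurableSet C1 := (IsGδ.setOf_continuousAt (rep u)).measurableSet
  have hC2m : MeasurableSet C2 := (IsGδ.setOf_continuousAt (rep v)).measurableSet
  have hcover : (C1 ∩ C2) ∪ (C1ᶜ ∪ C2ᶜ) = Set.univ := by
    ext x
    simp only [Set.mem_union, Set.mem_inter_iff, Set.mem_compl_iff, Set.mem_univ, iff_true]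
    tauto
  have h1 : AEMeasurable (fL rep u v) ((volume.restrict Cell).restrict (C1 ∩ C2)) := by
    have hcont : ContinuousOn (fL rep u v) (C1 ∩ C2) := by
      intro x hx
      have hcu : ContinuousAt (rep u) x := hx.1
      have hcv : ContinuousAt (rep v) x := hx.2
      exact ((hcu.mul (Complex.continuous_conj.continuousAt.comp hcv))).continuousWithinAt
    have hm : MeasurableSet (C1 ∩ C2) := hC1m.inter hC2m
    rw [Measure.restrict_restrict hm]
    have hm2 : MeasurableSet ((C1 ∩ C2) ∩ Cell) := hm.inter measurableSet_Cell
    exact (hcont.mono Set.inter_subset_left).aemeasurable hm2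
  have h2 : AEMeasurable (fL rep u v) ((volume.restrict Cell).restrict C1ᶜ) :=
    fL_aemeasurable_discont rep hmodel u hu v
  have h3 : AEMeasurable (fL rep u v) ((volume.restrict Cell).restrict C2ᶜ) := by
    have hvd := fL_aemeasurable_discont rep hmodel v hv u
    have heq : ∀ x, fL rep u v x = (starRingEnd ℂ) (fL rep v u x) := by
      intro x; simp [fL, mul_comm]
    have : AEMeasurable (fun x => (starRingEnd ℂ) (fL rep v u x))
        ((volume.restrict Cell).restrict C2ᶜ) :=
      (Complex.continuous_conj.measurable).comp_aemeasurable hvd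
    exact this.congr (Filter.Eventually.of_forall fun x => (heq x).symm)
  have := (aemeasurable_union_iff.mpr ⟨h1, aemeasurable_union_iff.mpr ⟨h2, h3⟩⟩ :
    AEMeasurable (fL rep u v) ((volume.restrict Cell).restrict ((C1 ∩ C2) ∪ (C1ᶜ ∪ C2ᶜ))))
  rwa [hcover, Measure.restrict_univ] at this

/-- The `L²` pairing integrand is integrable on the cell. -/
lemma fL_integrable (u v : H) : Integrable (fL rep u v) (volume.restrict Cell) := by
  refine Integrable.mono'
    (g := fun x => suF rep u x + suF rep v x)
    ((suF_integrable rep hmodel u).1.add (suF_integrable rep hmodel v).1)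
    (fL_aemeasurable rep hmodel u v).aestronglyMeasurable ?_
  refine Filter.Eventually.of_forall fun x => ?_
  have h1 : ‖fL rep u v x‖ = ‖rep u x‖ * ‖rep v x‖ := by
    rw [fL, norm_mul, RCLike.norm_conj]
  rw [h1]
  have h2 : ‖rep u x‖ * ‖rep v x‖ ≤ (‖rep u x‖ ^ 2 + ‖rep v x‖ ^ 2) / 2 := by
    nlinarith [sq_nonneg (‖rep u x‖ - ‖rep v x‖)]
  refine h2.trans ?_
  have h3 := nuF_le_suF rep u x
  have h4 := nuF_le_suF rep v x
  simp only [nuF] at h3 h4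
  show _ ≤ suF rep u x + suF rep v x
  linarith [suF_nonneg rep u x, suF_nonneg rep v x]

omit hmodel in
/-- Cauchy-Schwarz for set integrals of nonnegative functions. -/
lemma integral_cs {μ : Measure (ℝ × ℝ)} {f g : ℝ × ℝ → ℝ}
    (hf0 : ∀ x, 0 ≤ f x) (hg0 : ∀ x, 0 ≤ g x)
    (hfm : AEMeasurable f μ) (hgm : AEMeasurable g μ)
    (hf2 : Integrable (fun x => f x ^ 2) μ) (hg2 : Integrable (fun x => g x ^ 2) μ) :
    ∫ x, f x * g x ∂μ ≤ Real.sqrt (∫ x, f x ^ 2 ∂μ) * Real.sqrt (∫ x, g x ^ 2 ∂μ) := by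
  have hpq : (2 : ℝ).HolderConjugate 2 := Real.HolderConjugate.two_two
  have h2 : ENNReal.ofReal (2 : ℝ) = 2 := by
    rw [ENNReal.ofReal_ofNat]
  have hmf : MemLp f (ENNReal.ofReal 2) μ := by
    rw [h2]
    exact (memLp_two_iff_integrable_sq hfm.aestronglyMeasurable).mpr hf2
  have hmg : MemLp g (ENNReal.ofReal 2) μ := by
    rw [h2]
    exact (memLp_two_iff_integrable_sq hgm.aestronglyMeasurable).mpr hg2
  have := integral_mul_le_Lp_mul_Lq_of_nonneg hpq
    (Filter.Eventually.of_forall hf0) (Filter.Eventually.of_forall hg0) hmf hmg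
  have hrpow : ∀ a : ℝ, a ^ (2 : ℝ) = a ^ 2 := by
    intro a
    rw [show (2 : ℝ) = ((2 : ℕ) : ℝ) by norm_num, Real.rpow_natCast]
  rw [show (∫ a, f a ^ (2:ℝ) ∂μ) = ∫ a, f a ^ 2 ∂μ from integral_congr_ae
      (Filter.Eventually.of_forall fun a => hrpow (f a)),
    show (∫ a, g a ^ (2:ℝ) ∂μ) = ∫ a, g a ^ 2 ∂μ from integral_congr_ae
      (Filter.Eventually.of_forall fun a => hrpow (g a))] at this
  rw [Real.sqrt_eq_rpow, Real.sqrt_eq_rpow]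
  exact this

lemma sqrt_nuF_le (v : H) : Real.sqrt (∫ x in Cell, nuF rep v x) ≤ ‖v‖ := by
  refine (Real.sqrt_le_sqrt (nuF_integral_le rep hmodel v)).trans ?_
  rw [Real.sqrt_sq (norm_nonneg v)]

lemma sqrt_q1F_le (v : H) : Real.sqrt (∫ x in Cell, q1F rep v x) ≤ ‖v‖ := by
  refine (Real.sqrt_le_sqrt (q1F_integral_le rep hmodel v)).trans ?_
  rw [Real.sqrt_sq (norm_nonneg v)]

lemma sqrt_q2F_le (v : H) : Real.sqrt (∫ x in Cell, q2F rep v x) ≤ ‖v‖ := by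
  refine (Real.sqrt_le_sqrt (q2F_integral_le rep hmodel v)).trans ?_
  rw [Real.sqrt_sq (norm_nonneg v)]

lemma aemeas_norm_rep (u : H) :
    AEMeasurable (fun x => ‖rep u x‖) (volume.restrict Cell) := by
  have h := (Real.continuous_sqrt.measurable).comp_aemeasurable
    (nuF_aemeasurable rep hmodel u)
  refine h.congr (Filter.Eventually.of_forall fun x => ?_)
  simp only [Function.comp, nuF]
  rw [Real.sqrt_sq (norm_nonneg _)]

/-- The basic `L²` bound on the pairing. -/
lemma bound_fL_norm (d v : H) :
    (∫ x in Cell, ‖fL rep d v x‖) ≤ Real.sqrt (∫ x in Cell, nuF rep d x) * ‖v‖ := by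
  have h1 : (∫ x in Cell, ‖fL rep d v x‖)
      = ∫ x in Cell, ‖rep d x‖ * ‖rep v x‖ := by
    refine integral_congr_ae (Filter.Eventually.of_forall fun x => ?_)
    simp only [fL, norm_mul, RCLike.norm_conj]
  rw [h1]
  have h2 := integral_cs (μ := volume.restrict Cell)
    (f := fun x => ‖rep d x‖) (g := fun x => ‖rep v x‖)
    (fun x => norm_nonneg _) (fun x => norm_nonneg _)
    (aemeas_norm_rep rep hmodel d) (aemeas_norm_rep rep hmodel v)
    (nuF_integrable rep hmodel d) (nuF_integrable rep hmodel v)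
  refine h2.trans ?_
  exact mul_le_mul_of_nonneg_left (sqrt_nuF_le rep hmodel v) (Real.sqrt_nonneg _)

lemma bound_fL (d v : H) :
    ‖∫ x in Cell, fL rep d v x‖ ≤ Real.sqrt (∫ x in Cell, nuF rep d x) * ‖v‖ :=
  (norm_integral_le_integral_norm _).trans (bound_fL_norm rep hmodel d v)

/-- Bound for the weighted `L²` pairing. -/
lemma bound_eps (ε : ℝ × ℝ → ℝ) (c : ℝ) (hc : ∀ x, |ε x| ≤ c) (d v : H) :
    ‖∫ x in Cell, (ε x : ℂ) * rep d x * (starRingEnd ℂ) (rep v x)‖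
      ≤ max c 0 * (Real.sqrt (∫ x in Cell, nuF rep d x) * ‖v‖) := by
  refine (norm_integral_le_integral_norm _).trans ?_
  have hint : Integrable (fun x => max c 0 * ‖fL rep d v x‖) (volume.restrict Cell) :=
    ((fL_integrable rep hmodel d v).norm).const_mul _
  have hmono : (∫ x in Cell, ‖(ε x : ℂ) * rep d x * (starRingEnd ℂ) (rep v x)‖)
      ≤ ∫ x in Cell, max c 0 * ‖fL rep d v x‖ := by
    refine integral_mono_of_nonneg (Filter.Eventually.of_forall fun x => norm_nonneg _)
      hint (Filter.Eventually.of_forall fun x => ?_)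
    show ‖(ε x : ℂ) * rep d x * (starRingEnd ℂ) (rep v x)‖ ≤ max c 0 * ‖fL rep d v x‖
    have h1 : ‖(ε x : ℂ) * rep d x * (starRingEnd ℂ) (rep v x)‖
        = |ε x| * ‖fL rep d v x‖ := by
      rw [mul_assoc, norm_mul, Complex.norm_real, Real.norm_eq_abs]
      rfl
    rw [h1]
    exact mul_le_mul_of_nonneg_right (le_max_of_le_left (hc x)) (norm_nonneg _)
  refine hmono.trans ?_
  rw [integral_const_mul]
  exact mul_le_mul_of_nonneg_left (bound_fL_norm rep hmodel d v) (le_max_right c 0)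

omit hmodel in
/-- Helper: product of two nonneg `L²` functions is integrable. -/
lemma prod_integrable {μ : Measure (ℝ × ℝ)} {a b : ℝ × ℝ → ℝ}
    (ha0 : ∀ x, 0 ≤ a x) (hb0 : ∀ x, 0 ≤ b x)
    (haM : AEMeasurable a μ) (hbM : AEMeasurable b μ)
    (ha2 : Integrable (fun x => a x ^ 2) μ) (hb2 : Integrable (fun x => b x ^ 2) μ) :
    Integrable (fun x => a x * b x) μ := by
  refine Integrable.mono' (g := fun x => (a x ^ 2 + b x ^ 2) / 2)
    ((ha2.add hb2).div_const 2) (haM.mul hbM).aestronglyMeasurable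
    (Filter.Eventually.of_forall fun x => ?_)
  rw [Real.norm_of_nonneg (mul_nonneg (ha0 x) (hb0 x))]
  nlinarith [sq_nonneg (a x - b x)]

/-- Bound for the gradient pairing appearing in `a₁`. -/
lemma bound_grad (k1 k2 : ℝ) (d v : H) :
    ‖∫ x in Cell, rep d x *
        ((k1 : ℂ) * (starRingEnd ℂ) ((gradF (rep v) x).1)
          + (k2 : ℂ) * (starRingEnd ℂ) ((gradF (rep v) x).2))‖
      ≤ (|k1| + |k2|) * (Real.sqrt (∫ x in Cell, nuF rep d x) * ‖v‖) := by
  set a : ℝ × ℝ → ℝ := fun x => ‖rep d x‖ with ha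
  set b1 : ℝ × ℝ → ℝ := fun x => ‖fderiv ℝ (rep v) x (1, 0)‖ with hb1
  set b2 : ℝ × ℝ → ℝ := fun x => ‖fderiv ℝ (rep v) x (0, 1)‖ with hb2
  have haM := aemeas_norm_rep rep hmodel d
  have hb1M : AEMeasurable b1 (volume.restrict Cell) :=
    ((measurable_d1 rep v).norm).aemeasurable
  have hb2M : AEMeasurable b2 (volume.restrict Cell) :=
    ((measurable_d2 rep v).norm).aemeasurable
  have hab1 : Integrable (fun x => a x * b1 x) (volume.restrict Cell) :=
    prod_integrable (fun x => norm_nonneg _) (fun x => norm_nonneg _) haM hb1M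
      (nuF_integrable rep hmodel d) (q1F_integrable rep hmodel v)
  have hab2 : Integrable (fun x => a x * b2 x) (volume.restrict Cell) :=
    prod_integrable (fun x => norm_nonneg _) (fun x => norm_nonneg _) haM hb2M
      (nuF_integrable rep hmodel d) (q2F_integrable rep hmodel v)
  refine (norm_integral_le_integral_norm _).trans ?_
  have hmono : (∫ x in Cell, ‖rep d x *
        ((k1 : ℂ) * (starRingEnd ℂ) ((gradF (rep v) x).1)
          + (k2 : ℂ) * (starRingEnd ℂ) ((gradF (rep v) x).2))‖)
      ≤ ∫ x in Cell, (|k1| * (a x * b1 x) + |k2| * (a x * b2 x)) := by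
    refine integral_mono_of_nonneg (Filter.Eventually.of_forall fun x => norm_nonneg _)
      ((hab1.const_mul _).add (hab2.const_mul _))
      (Filter.Eventually.of_forall fun x => ?_)
    have h1 : ‖rep d x *
        ((k1 : ℂ) * (starRingEnd ℂ) ((gradF (rep v) x).1)
          + (k2 : ℂ) * (starRingEnd ℂ) ((gradF (rep v) x).2))‖
        ≤ a x * (|k1| * b1 x + |k2| * b2 x) := by
      rw [norm_mul]
      refine mul_le_mul_of_nonneg_left ?_ (norm_nonneg _)
      refine (norm_add_le _ _).trans ?_
      rw [norm_mul, norm_mul, RCLike.norm_conj, RCLike.norm_conj,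
        Complex.norm_real, Complex.norm_real]
      rfl
    refine h1.trans ?_
    show _ ≤ |k1| * (a x * b1 x) + |k2| * (a x * b2 x)
    exact le_of_eq (by ring)
  refine hmono.trans ?_
  rw [integral_add (hab1.const_mul _) (hab2.const_mul _), integral_const_mul,
    integral_const_mul]
  have e1 : (∫ x in Cell, a x * b1 x)
      ≤ Real.sqrt (∫ x in Cell, nuF rep d x) * ‖v‖ := by
    have := integral_cs (μ := volume.restrict Cell) (f := a) (g := b1)
      (fun x => norm_nonneg _) (fun x => norm_nonneg _) haM hb1M
      (nuF_integrable rep hmodel d) (q1F_integrable rep hmodel v)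
    refine this.trans ?_
    exact mul_le_mul_of_nonneg_left (sqrt_q1F_le rep hmodel v) (Real.sqrt_nonneg _)
  have e2 : (∫ x in Cell, a x * b2 x)
      ≤ Real.sqrt (∫ x in Cell, nuF rep d x) * ‖v‖ := by
    have := integral_cs (μ := volume.restrict Cell) (f := a) (g := b2)
      (fun x => norm_nonneg _) (fun x => norm_nonneg _) haM hb2M
      (nuF_integrable rep hmodel d) (q2F_integrable rep hmodel v)
    refine this.trans ?_
    exact mul_le_mul_of_nonneg_left (sqrt_q2F_le rep hmodel v) (Real.sqrt_nonneg _)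
  have hsq : 0 ≤ Real.sqrt (∫ x in Cell, nuF rep d x) * ‖v‖ :=
    mul_nonneg (Real.sqrt_nonneg _) (norm_nonneg _)
  calc |k1| * (∫ x in Cell, a x * b1 x) + |k2| * (∫ x in Cell, a x * b2 x)
      ≤ |k1| * (Real.sqrt (∫ x in Cell, nuF rep d x) * ‖v‖)
        + |k2| * (Real.sqrt (∫ x in Cell, nuF rep d x) * ‖v‖) :=
        add_le_add (mul_le_mul_of_nonneg_left e1 (abs_nonneg _))
          (mul_le_mul_of_nonneg_left e2 (abs_nonneg _))
    _ = (|k1| + |k2|) * (Real.sqrt (∫ x in Cell, nuF rep d x) * ‖v‖) := by ring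

/-- The key splitting identity. -/
lemma dirichlet_sub_inner (d v : H) :
    (∫ x in Cell, gG rep d v x) - ⟪v, d⟫_ℂ = - ∫ x in Cell, fL rep d v x := by
  have hg := gG_integrable rep hmodel d v
  have hf := fL_integrable rep hmodel d v
  have hsplit : (∫ x in Cell, bF rep d v x)
      = (∫ x in Cell, fL rep d v x) + ∫ x in Cell, gG rep d v x := by
    rw [show (∫ x in Cell, bF rep d v x)
        = ∫ x in Cell, (fL rep d v x + gG rep d v x) from
      integral_congr_ae (Filter.Eventually.of_forall fun x => by rw [bF_eq rep d v])]
    exact integral_add hf hg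
  rw [hmodel d v, hsplit]
  ring

end Meas

/-- for every `λ ∈ ℂ`, the operator `Q(λ) = A₀ + λA₁ + λ²A₂` on `H¹(T²)` is a
Fredholm operator of index zero, where `A₀, A₁, A₂` are defined via Riesz representation by
the forms `a₀(u,v) = ∫ ∇u·∇v̄ - ω²ε u v̄ dx`, `a₁(u,v) = 2i ∫ u k̂·∇v̄ dx`,
`a₂(u,v) = ∫ u v̄ dx`. -/
theorem statement8 (H : Type) [NormedAddCommGroup H] [InnerProductSpace ℂ H] [CompleteSpace H]
    (rep : H →ₗ[ℂ] ((ℝ × ℝ) → ℂ)) (hmodel : IsH1TorusModel H rep)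
    (hcpt : CompactEmbeddingL2 rep)
    (ε : ℝ × ℝ → ℝ) (hmeas : Measurable ε) (hbd : ∃ c : ℝ, ∀ x, |ε x| ≤ c)
    (hper : PeriodicT2 (fun x => (ε x : ℂ))) (ω : ℝ)
    (k1 k2 : ℝ) (hk : k1 ^ 2 + k2 ^ 2 = 1)
    (A0 A1 A2 : H →L[ℂ] H)
    (hA0 : ∀ u v : H, ⟪v, A0 u⟫_ℂ = formDirichlet rep u v
      - (ω : ℂ) ^ 2 * ∫ x in Cell, (ε x : ℂ) * rep u x * (starRingEnd ℂ) (rep v x))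
    (hA1 : ∀ u v : H, ⟪v, A1 u⟫_ℂ = formA1 rep k1 k2 u v)
    (hA2 : ∀ u v : H, ⟪v, A2 u⟫_ℂ = formA2 rep u v) :
    ∀ lam : ℂ, IsFredholmIndexZero (A0 + lam • A1 + lam ^ 2 • A2) := by

  classical
  intro lam
  obtain ⟨c, hc⟩ := hbd
  have hm : ∀ u v : H, ⟪v, u⟫_ℂ = ∫ x in Cell, bF rep u v x := fun u v => hmodel.inner_eq u v
  set T : H →L[ℂ] H := A0 + lam • A1 + lam ^ 2 • A2 with hTdef
  set K : H →L[ℂ] H := T - 1 with hKdef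
  set C0 : ℝ := ‖lam ^ 2 - 1‖ + |ω| ^ 2 * max c 0 + ‖lam‖ * 2 * (|k1| + |k2|) with hC0
  have hC0nn : 0 ≤ C0 := by positivity
  -- the key estimate
  have hest : ∀ d : H, ‖K d‖ ≤ C0 * Real.sqrt (∫ x in Cell, nuF rep d x) := by
    intro d
    set v : H := K d with hv
    set sq : ℝ := Real.sqrt (∫ x in Cell, nuF rep d x) with hsq
    have hsqnn : 0 ≤ sq := Real.sqrt_nonneg _
    have hinner : ⟪v, K d⟫_ℂ
        = (lam ^ 2 - 1) * (∫ x in Cell, fL rep d v x)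
          - (ω : ℂ) ^ 2 * (∫ x in Cell, (ε x : ℂ) * rep d x * (starRingEnd ℂ) (rep v x))
          + lam * (2 * Complex.I * ∫ x in Cell, rep d x *
            ((k1 : ℂ) * (starRingEnd ℂ) ((gradF (rep v) x).1)
              + (k2 : ℂ) * (starRingEnd ℂ) ((gradF (rep v) x).2))) := by
      have h1 : K d = T d - d := rfl
      have h2 : T d = A0 d + lam • A1 d + lam ^ 2 • A2 d := rfl
      rw [h1, inner_sub_right, h2, inner_add_right, inner_add_right,
        inner_smul_right, inner_smul_right, hA0 d v, hA1 d v, hA2 d v]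
      have h3 : formDirichlet rep d v = ∫ x in Cell, gG rep d v x := rfl
      have h4 : formA2 rep d v = ∫ x in Cell, fL rep d v x := rfl
      have h5 : formA1 rep k1 k2 d v = 2 * Complex.I * ∫ x in Cell, rep d x *
          ((k1 : ℂ) * (starRingEnd ℂ) ((gradF (rep v) x).1)
            + (k2 : ℂ) * (starRingEnd ℂ) ((gradF (rep v) x).2)) := rfl
      have h6 := dirichlet_sub_inner rep hm d v
      rw [h3, h4, h5]
      have h7 : (∫ x in Cell, gG rep d v x) - ⟪v, d⟫_ℂ
          = - ∫ x in Cell, fL rep d v x := h6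
      linear_combination h7
    have hnorm1 : ‖⟪v, K d⟫_ℂ‖ ≤ C0 * (sq * ‖v‖) := by
      rw [hinner]
      have t1 : ‖(lam ^ 2 - 1) * (∫ x in Cell, fL rep d v x)‖
          ≤ ‖lam ^ 2 - 1‖ * (sq * ‖v‖) := by
        rw [norm_mul]
        exact mul_le_mul_of_nonneg_left (bound_fL rep hm d v) (norm_nonneg _)
      have t2 : ‖(ω : ℂ) ^ 2 * (∫ x in Cell, (ε x : ℂ) * rep d x
            * (starRingEnd ℂ) (rep v x))‖
          ≤ |ω| ^ 2 * (max c 0 * (sq * ‖v‖)) := by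
        rw [norm_mul]
        have hω : ‖(ω : ℂ) ^ 2‖ = |ω| ^ 2 := by
          rw [norm_pow, Complex.norm_real, Real.norm_eq_abs]
        rw [hω]
        exact mul_le_mul_of_nonneg_left (bound_eps rep hm ε c hc d v) (by positivity)
      have t3 : ‖lam * (2 * Complex.I * ∫ x in Cell, rep d x *
            ((k1 : ℂ) * (starRingEnd ℂ) ((gradF (rep v) x).1)
              + (k2 : ℂ) * (starRingEnd ℂ) ((gradF (rep v) x).2)))‖
          ≤ ‖lam‖ * 2 * ((|k1| + |k2|) * (sq * ‖v‖)) := by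
        rw [norm_mul, norm_mul]
        have h2i : ‖(2 : ℂ) * Complex.I‖ = 2 := by
          rw [norm_mul, Complex.norm_I, mul_one]
          norm_num
        rw [h2i, mul_assoc]
        refine mul_le_mul_of_nonneg_left ?_ (norm_nonneg lam)
        exact mul_le_mul_of_nonneg_left (bound_grad rep hm k1 k2 d v) (by norm_num)
      calc ‖(lam ^ 2 - 1) * (∫ x in Cell, fL rep d v x)
            - (ω : ℂ) ^ 2 * (∫ x in Cell, (ε x : ℂ) * rep d x
              * (starRingEnd ℂ) (rep v x))
            + lam * (2 * Complex.I * ∫ x in Cell, rep d x *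
              ((k1 : ℂ) * (starRingEnd ℂ) ((gradF (rep v) x).1)
                + (k2 : ℂ) * (starRingEnd ℂ) ((gradF (rep v) x).2)))‖
          ≤ ‖(lam ^ 2 - 1) * (∫ x in Cell, fL rep d v x)
              - (ω : ℂ) ^ 2 * (∫ x in Cell, (ε x : ℂ) * rep d x
                * (starRingEnd ℂ) (rep v x))‖
            + ‖lam * (2 * Complex.I * ∫ x in Cell, rep d x *
              ((k1 : ℂ) * (starRingEnd ℂ) ((gradF (rep v) x).1)
                + (k2 : ℂ) * (starRingEnd ℂ) ((gradF (rep v) x).2)))‖ :=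
            norm_add_le _ _
        _ ≤ (‖(lam ^ 2 - 1) * (∫ x in Cell, fL rep d v x)‖
              + ‖(ω : ℂ) ^ 2 * (∫ x in Cell, (ε x : ℂ) * rep d x
                * (starRingEnd ℂ) (rep v x))‖)
            + ‖lam * (2 * Complex.I * ∫ x in Cell, rep d x *
              ((k1 : ℂ) * (starRingEnd ℂ) ((gradF (rep v) x).1)
                + (k2 : ℂ) * (starRingEnd ℂ) ((gradF (rep v) x).2)))‖ := by
            gcongr
            exact norm_sub_le _ _
        _ ≤ (‖lam ^ 2 - 1‖ * (sq * ‖v‖) + |ω| ^ 2 * (max c 0 * (sq * ‖v‖)))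
            + ‖lam‖ * 2 * ((|k1| + |k2|) * (sq * ‖v‖)) :=
            add_le_add (add_le_add t1 t2) t3
        _ = C0 * (sq * ‖v‖) := by rw [hC0]; ring
    have hvsq : ‖v‖ ^ 2 = ‖⟪v, K d⟫_ℂ‖ := by
      have h8 : ⟪v, K d⟫_ℂ = ⟪v, v⟫_ℂ := rfl
      rw [h8, @inner_self_eq_norm_sq_to_K ℂ, norm_pow, RCLike.norm_ofReal, abs_norm]
    rcases eq_or_ne (‖v‖) 0 with h0 | h0
    · show ‖v‖ ≤ C0 * sq
      rw [h0]
      positivity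
    · have hpos : 0 < ‖v‖ := lt_of_le_of_ne (norm_nonneg _) (Ne.symm h0)
      have hfin : ‖v‖ ^ 2 ≤ C0 * (sq * ‖v‖) := hvsq.le.trans hnorm1
      show ‖v‖ ≤ C0 * sq
      nlinarith
  -- sequential compactness of K
  have hKcpt : SeqCompactOp K := by
    intro s hs
    obtain ⟨φ, hφ, hcau⟩ := hcpt s hs
    refine ⟨φ, hφ, ?_⟩
    rw [Metric.cauchySeq_iff]
    intro δ hδ
    have hC1 : (0 : ℝ) < C0 + 1 := by linarith
    obtain ⟨N, hN⟩ := hcau ((δ / (C0 + 1)) ^ 2) (by positivity)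
    refine ⟨N, fun m hm' n hn' => ?_⟩
    have hd := hN m hm' n hn'
    set dd : H := s (φ m) - s (φ n) with hdd
    have hd' : (∫ x in Cell, nuF rep dd x) < (δ / (C0 + 1)) ^ 2 := hd
    have hsqlt : Real.sqrt (∫ x in Cell, nuF rep dd x) < δ / (C0 + 1) := by
      have h1 := Real.sqrt_lt_sqrt
        (integral_nonneg (fun x => nuF_nonneg rep dd x)) hd'
      rwa [Real.sqrt_sq (by positivity : (0:ℝ) ≤ δ / (C0 + 1))] at h1
    have h2 : dist (K (s (φ m))) (K (s (φ n))) = ‖K dd‖ := by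
      rw [dist_eq_norm, ← map_sub]
    rw [h2]
    calc ‖K dd‖ ≤ C0 * Real.sqrt (∫ x in Cell, nuF rep dd x) := hest dd
      _ ≤ (C0 + 1) * Real.sqrt (∫ x in Cell, nuF rep dd x) := by
          have := Real.sqrt_nonneg (∫ x in Cell, nuF rep dd x)
          nlinarith
      _ < (C0 + 1) * (δ / (C0 + 1)) := by
          exact mul_lt_mul_of_pos_left hsqlt hC1
      _ = δ := by field_simp
  have hfred := fredholm_one_add_seqCompact K hKcpt
  have hTK : 1 + K = T := by rw [hKdef, add_comm, sub_add_cancel]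
  rwa [hTK] at hfred
end
end

section
/- Let W be a real 2N×2N Hamiltonian matrix ((WJ)ᵀ = WJ) and μ_0 ∈ C such that ±μ_0 and ±conj(μ_0) are not eigenvalues of W. Then R = (W - μ_0 I)⁻¹(W + μ_0 I)⁻¹(W - conj(μ_0) I)⁻¹(W + conj(μ_0) I)⁻¹ is skew-Hamiltonian: (RJ)ᵀ = -RJ. Moreover R is a real matrix. -/
open Matrix

section Aux

variable {m : Type*} [DecidableEq m] [Fintype m]

private lemma aux_comm_inv (X Y : Matrix m m ℂ) (h : X * Y = Y * X) :
    X⁻¹ * Y⁻¹ = Y⁻¹ * X⁻¹ := by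
  rw [← Matrix.mul_inv_rev, ← Matrix.mul_inv_rev, h]

private lemma aux_map_conj_inv (M : Matrix m m ℂ) :
    (M⁻¹).map (starRingEnd ℂ) = (M.map (starRingEnd ℂ))⁻¹ := by
  have h : ∀ X : Matrix m m ℂ, X.map (starRingEnd ℂ) = (Xᴴ)ᵀ := by
    intro X; ext i j; simp [Matrix.conjTranspose_apply]
  rw [h, h, Matrix.conjTranspose_nonsing_inv, Matrix.transpose_nonsing_inv]

end Aux

/-- let `W` be a real `2N×2N` Hamiltonian matrix (`(WJ)ᵀ = WJ`) and
`μ₀ ∈ ℂ` such that none of `±μ₀, ±conj μ₀` is an eigenvalue of `W`. Then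
`R = (W-μ₀)⁻¹(W+μ₀)⁻¹(W-conj μ₀)⁻¹(W+conj μ₀)⁻¹` is skew-Hamiltonian, `(RJ)ᵀ = -RJ`,
and `R` is a real matrix. -/
theorem statement18 (N : ℕ) (W : Matrix (Fin N ⊕ Fin N) (Fin N ⊕ Fin N) ℝ)
    (J : Matrix (Fin N ⊕ Fin N) (Fin N ⊕ Fin N) ℝ) (hJ : J = fromBlocks 0 1 (-1) 0)
    (hW : (W * J)ᵀ = W * J)
    (mu0 : ℂ)
    (hreg : ∀ mu ∈ ({mu0, -mu0, (starRingEnd ℂ) mu0, -(starRingEnd ℂ) mu0} : Set ℂ),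
      (W.map Complex.ofReal - mu • 1).det ≠ 0)
    (R : Matrix (Fin N ⊕ Fin N) (Fin N ⊕ Fin N) ℂ)
    (hR : R = (W.map Complex.ofReal - mu0 • 1)⁻¹ * (W.map Complex.ofReal + mu0 • 1)⁻¹ *
      (W.map Complex.ofReal - (starRingEnd ℂ) mu0 • 1)⁻¹ *
      (W.map Complex.ofReal + (starRingEnd ℂ) mu0 • 1)⁻¹) :
    (R * J.map Complex.ofReal)ᵀ = -(R * J.map Complex.ofReal) ∧
      ∀ i j, (starRingEnd ℂ) (R i j) = R i j := by
  set Wc := W.map Complex.ofReal with hWc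
  set Jc := J.map Complex.ofReal with hJc
  have hJcB : Jc = fromBlocks 0 1 (-1) 0 := by
    rw [hJc, hJ]
    ext i j
    cases i <;> cases j <;>
      simp [Matrix.fromBlocks, Matrix.map_apply, Matrix.one_apply, apply_ite]
  -- Jc * Jc = -1
  have hJ2 : Jc * Jc = -1 := by
    rw [hJcB, Matrix.fromBlocks_multiply]
    simp [← Matrix.fromBlocks_one, Matrix.fromBlocks_neg]
  -- Jcᵀ = -Jc
  have hJt : Jcᵀ = -Jc := by
    rw [hJcB, Matrix.fromBlocks_transpose]
    simp [Matrix.fromBlocks_neg]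
  -- Jc⁻¹ = -Jc
  have hJinv : Jc⁻¹ = -Jc := by
    apply Matrix.inv_eq_right_inv
    rw [Matrix.mul_neg, hJ2, neg_neg]
  -- transported Hamiltonian condition
  have hmmR : ∀ X Y : Matrix (Fin N ⊕ Fin N) (Fin N ⊕ Fin N) ℝ,
      (X * Y).map Complex.ofReal = X.map Complex.ofReal * Y.map Complex.ofReal := by
    intro X Y
    ext i j
    simp [Matrix.map_apply, Matrix.mul_apply]
  have hWcJ : (Wc * Jc)ᵀ = Wc * Jc := by
    rw [hWc, hJc, ← hmmR, ← Matrix.transpose_map, hW]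
  -- Wcᵀ = Jc * Wc * Jc
  have hWt : Wcᵀ = Jc * Wc * Jc := by
    have h1 : -(Jc * Wcᵀ) = Wc * Jc := by
      calc -(Jc * Wcᵀ) = Jcᵀ * Wcᵀ := by rw [hJt, Matrix.neg_mul]
        _ = (Wc * Jc)ᵀ := by rw [Matrix.transpose_mul]
        _ = Wc * Jc := hWcJ
    calc Wcᵀ = -(-1 : Matrix _ _ ℂ) * Wcᵀ := by simp
      _ = -(Jc * Jc) * Wcᵀ := by rw [hJ2]
      _ = Jc * -(Jc * Wcᵀ) := by
          rw [Matrix.neg_mul, ← Matrix.mul_neg, Matrix.mul_assoc, Matrix.mul_neg]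
      _ = Jc * (Wc * Jc) := by rw [h1]
      _ = Jc * Wc * Jc := by rw [Matrix.mul_assoc]
  -- transpose of shifted matrix
  have hshift : ∀ mu : ℂ, (Wc + mu • 1)ᵀ = Jc * (Wc - mu • 1) * Jc := by
    intro mu
    have : Jc * (mu • 1) * Jc = -(mu • 1) := by
      rw [Matrix.mul_smul, Matrix.mul_one, Matrix.smul_mul, hJ2, smul_neg]
    rw [Matrix.transpose_add, hWt, Matrix.transpose_smul, Matrix.transpose_one,
      Matrix.mul_sub, Matrix.sub_mul, this, sub_neg_eq_add]
  -- transpose of inverse of shifted matrix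
  have hshiftinv : ∀ mu : ℂ, ((Wc + mu • 1)⁻¹)ᵀ = Jc * (Wc - mu • 1)⁻¹ * Jc := by
    intro mu
    rw [Matrix.transpose_nonsing_inv, hshift, Matrix.mul_inv_rev, Matrix.mul_inv_rev,
      hJinv, Matrix.neg_mul, Matrix.mul_neg, Matrix.mul_neg, neg_neg, Matrix.mul_assoc]
  have hshiftinv' : ∀ mu : ℂ, ((Wc - mu • 1)⁻¹)ᵀ = Jc * (Wc + mu • 1)⁻¹ * Jc := by
    intro mu
    have := hshiftinv (-mu)
    simpa [sub_eq_add_neg] using this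
  -- the four factors
  set A := Wc - mu0 • 1 with hA
  set B := Wc + mu0 • 1 with hB
  set C := Wc - (starRingEnd ℂ) mu0 • 1 with hC
  set D := Wc + (starRingEnd ℂ) mu0 • 1 with hD
  -- pairwise commutation
  have hcomm : ∀ a b : ℂ, (Wc + a • 1) * (Wc + b • 1) = (Wc + b • 1) * (Wc + a • 1) := by
    intro a b
    simp only [Matrix.add_mul, Matrix.mul_add, Matrix.smul_mul, Matrix.mul_smul,
      Matrix.one_mul, Matrix.mul_one, smul_smul, smul_add]
    rw [mul_comm a b]
    abel
  have hsub : ∀ a : ℂ, Wc - a • 1 = Wc + (-a) • 1 := by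
    intro a; rw [neg_smul, sub_eq_add_neg]
  have hcomm' : ∀ X Y, X ∈ ({A, B, C, D} : Set _) → Y ∈ ({A, B, C, D} : Set _) →
      X * Y = Y * X := by
    intro X Y hX hY
    simp only [Set.mem_insert_iff, Set.mem_singleton_iff] at hX hY
    rcases hX with h | h | h | h <;> rcases hY with h' | h' | h' | h' <;>
      subst h <;> subst h' <;>
      simp only [hA, hB, hC, hD, hsub] <;> exact hcomm _ _
  -- key rearrangement: C⁻¹ * D⁻¹ * A⁻¹ * B⁻¹ = R
  have hswap : ∀ X Y, X ∈ ({A, B, C, D} : Set _) → Y ∈ ({A, B, C, D} : Set _) →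
      X⁻¹ * Y⁻¹ = Y⁻¹ * X⁻¹ := fun X Y hX hY => aux_comm_inv X Y (hcomm' X Y hX hY)
  have hAmem : A ∈ ({A, B, C, D} : Set _) := by simp
  have hBmem : B ∈ ({A, B, C, D} : Set _) := by simp
  have hCmem : C ∈ ({A, B, C, D} : Set _) := by simp
  have hDmem : D ∈ ({A, B, C, D} : Set _) := by simp
  have hrearr : C⁻¹ * D⁻¹ * A⁻¹ * B⁻¹ = A⁻¹ * B⁻¹ * C⁻¹ * D⁻¹ := by
    calc C⁻¹ * D⁻¹ * A⁻¹ * B⁻¹ = C⁻¹ * (D⁻¹ * A⁻¹) * B⁻¹ := by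
          rw [Matrix.mul_assoc C⁻¹, ← Matrix.mul_assoc]
      _ = C⁻¹ * (A⁻¹ * D⁻¹) * B⁻¹ := by rw [hswap D A hDmem hAmem]
      _ = A⁻¹ * C⁻¹ * D⁻¹ * B⁻¹ := by
          rw [← Matrix.mul_assoc, hswap C A hCmem hAmem, Matrix.mul_assoc,
            ← Matrix.mul_assoc]
      _ = A⁻¹ * C⁻¹ * (B⁻¹ * D⁻¹) := by
          rw [Matrix.mul_assoc, hswap D B hDmem hBmem]
      _ = A⁻¹ * B⁻¹ * C⁻¹ * D⁻¹ := by
          rw [← Matrix.mul_assoc, Matrix.mul_assoc (A⁻¹), hswap C B hCmem hBmem,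
            ← Matrix.mul_assoc, Matrix.mul_assoc]
  constructor
  · -- skew-Hamiltonian
    have hRt : Rᵀ = -(Jc * R * Jc) := by
      have hAt : (A⁻¹)ᵀ = Jc * B⁻¹ * Jc := by rw [hA, hshiftinv' mu0]
      have hBt : (B⁻¹)ᵀ = Jc * A⁻¹ * Jc := by rw [hB, hshiftinv mu0]
      have hCt : (C⁻¹)ᵀ = Jc * D⁻¹ * Jc := by rw [hC, hshiftinv' _]
      have hDt : (D⁻¹)ᵀ = Jc * C⁻¹ * Jc := by rw [hD, hshiftinv _]
      have : Rᵀ = (D⁻¹)ᵀ * ((C⁻¹)ᵀ * ((B⁻¹)ᵀ * (A⁻¹)ᵀ)) := by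
        rw [hR]
        simp only [Matrix.transpose_mul, Matrix.mul_assoc]
      rw [this, hAt, hBt, hCt, hDt]
      calc (Jc * C⁻¹ * Jc) * ((Jc * D⁻¹ * Jc) * ((Jc * A⁻¹ * Jc) * (Jc * B⁻¹ * Jc)))
          = Jc * (C⁻¹ * (Jc * Jc) * (D⁻¹ * (Jc * Jc) * (A⁻¹ * (Jc * Jc) * B⁻¹))) * Jc := by
            simp only [Matrix.mul_assoc]
        _ = Jc * (C⁻¹ * (-1) * (D⁻¹ * (-1) * (A⁻¹ * (-1) * B⁻¹))) * Jc := by rw [hJ2]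
        _ = -(Jc * (C⁻¹ * D⁻¹ * A⁻¹ * B⁻¹) * Jc) := by
            simp only [Matrix.mul_neg, Matrix.neg_mul, Matrix.mul_one, neg_neg,
              Matrix.mul_assoc]
        _ = -(Jc * R * Jc) := by rw [hrearr, ← hR]
    rw [Matrix.transpose_mul, hJt, hRt, Matrix.neg_mul, Matrix.mul_neg, neg_neg,
      ← Matrix.mul_assoc, ← Matrix.mul_assoc, hJ2, Matrix.neg_mul, Matrix.one_mul,
      Matrix.neg_mul]
  · -- realness
    have hmapR : R.map (starRingEnd ℂ) = R := by
      have hmapmul : ∀ X Y : Matrix (Fin N ⊕ Fin N) (Fin N ⊕ Fin N) ℂ,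
          (X * Y).map (starRingEnd ℂ) = X.map (starRingEnd ℂ) * Y.map (starRingEnd ℂ) :=
        fun X Y => Matrix.map_mul
      have hWcreal : Wc.map (starRingEnd ℂ) = Wc := by
        ext i j; simp [hWc, Matrix.map_apply]
      have hmapshift : ∀ mu : ℂ,
          (Wc + mu • 1).map (starRingEnd ℂ) = Wc + (starRingEnd ℂ) mu • 1 := by
        intro mu
        ext i j
        by_cases h : i = j <;>
          simp [Matrix.map_apply, Matrix.add_apply, Matrix.smul_apply, Matrix.one_apply,
            hWc, h]
      have hmA : A.map (starRingEnd ℂ) = C := by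
        rw [hA, hC, hsub, hsub, hmapshift]; simp
      have hmB : B.map (starRingEnd ℂ) = D := by rw [hB, hD, hmapshift]
      have hmC : C.map (starRingEnd ℂ) = A := by
        rw [hA, hC, hsub, hsub, hmapshift]; simp [Complex.conj_conj]
      have hmD : D.map (starRingEnd ℂ) = B := by
        rw [hB, hD, hmapshift]; simp [Complex.conj_conj]
      rw [hR, hmapmul, hmapmul, hmapmul, aux_map_conj_inv, aux_map_conj_inv,
        aux_map_conj_inv, aux_map_conj_inv, hmA, hmB, hmC, hmD, hrearr]
    intro i j
    have := congrFun (congrFun hmapR i) j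
    simpa [Matrix.map_apply] using this
end
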